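/- arXiv:1807.06169 — 2 statements merged into one kernel-verified Lean document; each statement's English description precedes it below -/
import Mathlib

section
/- Let A be an abelian category with stability function Z as above, and suppose a nonzero object E admits two Harder–Narasimhan filtrations, i.e. finite filtrations 0 = E₀ ⊂ E₁ ⊂ ... ⊂ E_n = E with semistable quotients F_i = E_i/E_{i-1} of strictly decreasing phases. Then the two filtrations coincide (have the same length and the same subobjects). -/
open CategoryTheory Limits

/-- The semiclosed upper half-plane `{ρ·exp(iπφ) : ρ > 0, 0 < φ ≤ 1}`. -/
def upperH : Set ℂ := {z | 0 < z.im ∨ (z.im = 0 ∧ z.re < 0)}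

/-- The phase `φ(z) = (1/π)·arg z`, normalized to lie in `(0,1]` for `z ∈ H`. -/
noncomputable def phase (z : ℂ) : ℝ := Complex.arg z / Real.pi

/-- `Z` is a stability function: additive on short exact sequences and sending
nonzero objects into the semiclosed upper half-plane. -/
def IsStabilityFunction {C : Type*} [Category C] [Abelian C] (Z : C → ℂ) : Prop :=
  (∀ S : ShortComplex C, S.ShortExact → Z S.X₂ = Z S.X₁ + Z S.X₃) ∧
  (∀ X : C, ¬ IsZero X → Z X ∈ upperH)

/-- A nonzero object `E` is semistable if every nonzero subobject has phase at
most the phase of `E`. -/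
def Semistable {C : Type*} [Category C] [Abelian C] (Z : C → ℂ) (E : C) : Prop :=
  ¬ IsZero E ∧
    ∀ (F : C) (f : F ⟶ E), Mono f → ¬ IsZero F → phase (Z F) ≤ phase (Z E)

/-- The `i`-th graded factor `s(i+1)/s(i)` of a monotone chain of subobjects of `E`. -/
noncomputable def quotObj {C : Type*} [Category C] [Abelian C] {E : C} {n : ℕ}
    (s : Fin (n + 1) → Subobject E) (hs : Monotone s) (i : Fin n) : C :=
  cokernel (Subobject.ofLE (s i.castSucc) (s i.succ) (hs (Fin.castSucc_lt_succ : i.castSucc < i.succ).le))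

namespace HNaux

/-! ### Analytic part -/

noncomputable def cross (z w : ℂ) : ℝ := z.re * w.im - z.im * w.re

lemma ne_zero_of_mem {z : ℂ} (hz : z ∈ upperH) : z ≠ 0 := by
  rintro rfl; simp [upperH] at hz

lemma add_mem {z w : ℂ} (hz : z ∈ upperH) (hw : w ∈ upperH) : z + w ∈ upperH := by
  rcases hz with h | ⟨h1, h2⟩ <;> rcases hw with h' | ⟨h1', h2'⟩ <;>
    simp only [upperH, Set.mem_setOf_eq, Complex.add_im, Complex.add_re] <;>
    [(left; linarith); (left; linarith); (left; linarith);
     (right; constructor <;> linarith)]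

lemma arg_mem {z : ℂ} (hz : z ∈ upperH) : 0 < Complex.arg z ∧ Complex.arg z ≤ Real.pi := by
  refine ⟨?_, Complex.arg_le_pi z⟩
  rcases hz with h | ⟨h1, h2⟩
  · rcases lt_or_eq_of_le (Complex.arg_nonneg_iff.2 h.le) with h' | h'
    · exact h'
    · exact absurd (Complex.arg_eq_zero_iff.1 h'.symm).2 (by linarith)
  · rw [Complex.arg_eq_pi_iff.2 ⟨h2, h1⟩]; exact Real.pi_pos

lemma cross_eq (z w : ℂ) :
    cross z w = ‖z‖ * ‖w‖ *
      Real.sin (Complex.arg w - Complex.arg z) := by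
  rw [Real.sin_sub, cross, ← Complex.norm_mul_cos_arg z, ← Complex.norm_mul_sin_arg z,
    ← Complex.norm_mul_cos_arg w, ← Complex.norm_mul_sin_arg w]
  ring

lemma phase_lt_iff {z w : ℂ} (hz : z ∈ upperH) (hw : w ∈ upperH) :
    phase z < phase w ↔ 0 < cross z w := by
  obtain ⟨ha1, ha2⟩ := arg_mem hz
  obtain ⟨hb1, hb2⟩ := arg_mem hw
  have habs : 0 < ‖z‖ * ‖w‖ :=
    mul_pos (norm_pos_iff.mpr (ne_zero_of_mem hz)) (norm_pos_iff.mpr (ne_zero_of_mem hw))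
  rw [cross_eq]
  constructor
  · intro h
    have h' : Complex.arg z < Complex.arg w :=
      (div_lt_div_iff_of_pos_right Real.pi_pos).1 h
    exact mul_pos habs (Real.sin_pos_of_pos_of_lt_pi (by linarith) (by linarith))
  · intro h
    by_contra hc
    push_neg at hc
    have h' : Complex.arg w ≤ Complex.arg z :=
      (div_le_div_iff_of_pos_right Real.pi_pos).1 hc
    have : Real.sin (Complex.arg w - Complex.arg z) ≤ 0 :=
      Real.sin_nonpos_of_nonpos_of_neg_pi_le (by linarith) (by linarith)
    nlinarith

lemma phase_le_iff {z w : ℂ} (hz : z ∈ upperH) (hw : w ∈ upperH) :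
    phase z ≤ phase w ↔ 0 ≤ cross z w := by
  rw [← not_lt, phase_lt_iff hw hz, not_lt]
  constructor <;> intro h <;> · simp only [cross] at h ⊢; linarith

lemma seesaw {z w : ℂ} (hz : z ∈ upperH) (hw : w ∈ upperH)
    (h : phase z ≤ phase (z + w)) : phase (z + w) ≤ phase w := by
  have hzw := add_mem hz hw
  rw [phase_le_iff hz hzw] at h
  rw [phase_le_iff hzw hw]
  simp only [cross, Complex.add_re, Complex.add_im] at h ⊢
  nlinarith

/-! ### Categorical part -/

variable {C : Type*} [Category C] [Abelian C]

lemma Z_isZero (Z : C → ℂ) (hZ : IsStabilityFunction Z) {X : C} (hX : IsZero X) :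
    Z X = 0 := by
  let S : ShortComplex C := ShortComplex.mk (𝟙 X) (𝟙 X) (hX.eq_of_src _ _)
  have hm : Mono S.f := by dsimp [S]; infer_instance
  have he : Epi S.g := by dsimp [S]; infer_instance
  have := hZ.1 S ⟨ShortComplex.exact_of_isZero_X₂ S hX⟩
  rw [left_eq_add] at this
  exact this

/-- Quotient of `Y` by a smaller subobject `X`. -/
noncomputable def subQuot {E : C} (X Y : Subobject E) (h : X ≤ Y) : C :=
  cokernel (Subobject.ofLE X Y h)

lemma subQuot_congr {E : C} {X X' Y Y' : Subobject E} (hX : X = X') (hY : Y = Y')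
    {h : X ≤ Y} {h' : X' ≤ Y'} : subQuot X Y h = subQuot X' Y' h' := by
  cases hX; cases hY; rfl

lemma quotObj_eq {E : C} {n : ℕ} (s : Fin (n + 1) → Subobject E) (hs : Monotone s)
    (i : Fin n) : quotObj s hs i
      = subQuot (s i.castSucc) (s i.succ) (hs (Fin.castSucc_lt_succ : i.castSucc < i.succ).le) := rfl

lemma Z_subQuot (Z : C → ℂ) (hZ : IsStabilityFunction Z) {E : C} {X Y : Subobject E}
    (h : X ≤ Y) : Z ((Y : C)) = Z ((X : C)) + Z (subQuot X Y h) := by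
  let S : ShortComplex C := ShortComplex.mk (Subobject.ofLE X Y h)
    (cokernel.π (Subobject.ofLE X Y h)) (cokernel.condition _)
  have hm : Mono S.f := by dsimp [S]; infer_instance
  have he : Epi S.g := by dsimp [S]; infer_instance
  exact hZ.1 S ⟨S.exact_of_g_is_cokernel (cokernelIsCokernel _)⟩

/-- Hom vanishing phase comparison: a nonzero morphism between semistables forces
`φ(A) ≤ φ(B)`. -/
lemma phase_le_of_hom (Z : C → ℂ) (hZ : IsStabilityFunction Z) {A B : C}
    (hA : Semistable Z A) (hB : Semistable Z B) {f : A ⟶ B} (hf : f ≠ 0) :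
    phase (Z A) ≤ phase (Z B) := by
  set I := Abelian.image f with hI_def
  have hI : ¬ IsZero I := by
    intro h
    exact hf (by rw [← Abelian.image.fac f, h.eq_of_src (Abelian.image.ι f) 0,
      comp_zero])
  have hIB : phase (Z I) ≤ phase (Z B) := hB.2 I (Abelian.image.ι f) inferInstance hI
  set p := Abelian.factorThruImage f with hp_def
  let S : ShortComplex C := ShortComplex.mk (kernel.ι p) p (kernel.condition p)
  have hm : Mono S.f := by dsimp [S]; infer_instance
  have he : Epi S.g := by dsimp [S]; infer_instance
  have hadd : Z A = Z (kernel p) + Z I :=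
    hZ.1 S ⟨S.exact_of_f_is_kernel (kernelIsKernel p)⟩
  by_cases hK : IsZero (kernel p)
  · rw [Z_isZero Z hZ hK, zero_add] at hadd
    rw [hadd]; exact hIB
  · have h1 : phase (Z (kernel p)) ≤ phase (Z A) :=
      hA.2 _ (kernel.ι p) inferInstance hK
    have h2 : phase (Z A) ≤ phase (Z I) := by
      rw [hadd] at h1 ⊢
      exact seesaw (hZ.2 _ hK) (hZ.2 _ hI) h1
    exact h2.trans hIB

lemma comp_π_zero_of_le {E : C} {A X Y : Subobject E} (hXY : X ≤ Y) (hAY : A ≤ Y)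
    (hAX : A ≤ X) :
    Subobject.ofLE A Y hAY ≫ cokernel.π (Subobject.ofLE X Y hXY) = 0 := by
  rw [← Subobject.ofLE_comp_ofLE A X Y hAX hXY, Category.assoc, cokernel.condition,
    comp_zero]

lemma le_of_comp_π_zero {E : C} {A X Y : Subobject E} (hXY : X ≤ Y) (hAY : A ≤ Y)
    (hz : Subobject.ofLE A Y hAY ≫ cokernel.π (Subobject.ofLE X Y hXY) = 0) :
    A ≤ X := by
  refine Subobject.le_of_comm (Abelian.monoLift _ _ hz) ?_
  rw [← Subobject.ofLE_arrow hXY, ← Category.assoc, Abelian.monoLift_comp,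
    Subobject.ofLE_arrow]

/-- The canonical morphism `Y/X ⟶ Y'/X` for `X ≤ Y ≤ Y'`. -/
noncomputable def quotMap {E : C} {X Y Y' : Subobject E} (h1 : X ≤ Y) (h2 : Y ≤ Y') :
    subQuot X Y h1 ⟶ subQuot X Y' (h1.trans h2) :=
  cokernel.desc _ (Subobject.ofLE Y Y' h2 ≫ cokernel.π (Subobject.ofLE X Y' (h1.trans h2)))
    (by
      show Subobject.ofLE X Y h1 ≫ (Subobject.ofLE Y Y' h2 ≫
        cokernel.π (Subobject.ofLE X Y' (h1.trans h2))) = 0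
      rw [← Category.assoc, Subobject.ofLE_comp_ofLE, cokernel.condition])

open CategoryTheory.Abelian.Pseudoelement in
attribute [local instance] CategoryTheory.Abelian.Pseudoelement.objectToSort
  CategoryTheory.Abelian.Pseudoelement.homToFun in
lemma mono_quotMap {E : C} {X Y Y' : Subobject E} (h1 : X ≤ Y) (h2 : Y ≤ Y') :
    Mono (quotMap (E := E) h1 h2) := by
  apply mono_of_zero_of_map_zero
  intro a ha
  obtain ⟨y, hy⟩ := pseudo_surjective_of_epi (cokernel.π (Subobject.ofLE X Y h1)) a
  have hcomm : cokernel.π (Subobject.ofLE X Y h1) ≫ quotMap h1 h2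
      = Subobject.ofLE Y Y' h2 ≫ cokernel.π (Subobject.ofLE X Y' (h1.trans h2)) :=
    cokernel.π_desc _ _ _
  have hz : (cokernel.π (Subobject.ofLE X Y' (h1.trans h2)))
      ((Subobject.ofLE Y Y' h2) y) = 0 := by
    erw [← Abelian.Pseudoelement.comp_apply, ← hcomm, Abelian.Pseudoelement.comp_apply, hy, ha]
    rfl
  let S : ShortComplex C := ShortComplex.mk (Subobject.ofLE X Y' (h1.trans h2))
    (cokernel.π _) (cokernel.condition _)
  have hex : S.Exact := S.exact_of_g_is_cokernel (cokernelIsCokernel _)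
  obtain ⟨x, hx⟩ := pseudo_exact_of_exact hex _ hz
  have hx' : (Subobject.ofLE Y Y' h2) ((Subobject.ofLE X Y h1) x)
      = (Subobject.ofLE Y Y' h2) y := by
    rw [← Abelian.Pseudoelement.comp_apply, Subobject.ofLE_comp_ofLE]; exact hx
  have hxy : (Subobject.ofLE X Y h1) x = y := pseudo_injective_of_mono _ hx'
  rw [← hy, ← hxy, ← Abelian.Pseudoelement.comp_apply, cokernel.condition]
  exact zero_apply _ _

/-- If `X ≤ Y ≤ Y'` and `Y'/X` is semistable, then `φ(Y/X) ≤ φ(Y'/X)`. -/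
lemma phase_subQuot_le (Z : C → ℂ) {E : C} {X Y Y' : Subobject E}
    (h1 : X ≤ Y) (h2 : Y ≤ Y') (hQ : ¬ IsZero (subQuot X Y h1))
    (hss : Semistable Z (subQuot X Y' (h1.trans h2))) :
    phase (Z (subQuot X Y h1)) ≤ phase (Z (subQuot X Y' (h1.trans h2))) :=
  hss.2 _ (quotMap h1 h2) (mono_quotMap h1 h2) hQ

end HNaux

namespace HNaux2
open HNaux

variable {C : Type*} [Category C] [Abelian C]

lemma quotObj_zero {E : C} {n : ℕ} (s : Fin (n + 2) → Subobject E) (hs : Monotone s)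
    (h01 : s 0 ≤ s 1) : quotObj s hs 0 = subQuot (s 0) (s 1) h01 := by
  rw [quotObj_eq]
  exact subQuot_congr (by rw [Fin.castSucc_zero]) (by rw [Fin.succ_zero_eq_one])

lemma dichotomy (Z : C → ℂ) (hZ : IsStabilityFunction Z) {E : C} {m : ℕ}
    (A B : Subobject E) (hAB : A ≤ B) (hF : Semistable Z (subQuot A B hAB))
    (t : Fin (m + 2) → Subobject E) (ht : StrictMono t) (hb : A = t 0)
    (htl : t (Fin.last (m + 1)) = ⊤)
    (htss : ∀ i : Fin (m + 1), Semistable Z (quotObj t ht.monotone i))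
    (htdec : ∀ i j : Fin (m + 1), i < j →
      phase (Z (quotObj t ht.monotone j)) < phase (Z (quotObj t ht.monotone i))) :
    B ≤ t 1 ∨ phase (Z (subQuot A B hAB)) < phase (Z (quotObj t ht.monotone 0)) := by
  have claim : ∀ j : Fin (m + 2), B ≤ t j ∨ ∃ j' : Fin (m + 1),
      (j : ℕ) ≤ (j' : ℕ) ∧
      phase (Z (subQuot A B hAB)) ≤ phase (Z (quotObj t ht.monotone j')) := by
    intro j
    induction j using Fin.reverseInduction with
    | last => left; rw [htl]; exact le_top
    | cast j ih =>
      rcases ih with hle | ⟨j', hj', hph⟩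
      · have hAt : A ≤ t j.castSucc := by rw [hb]; exact ht.monotone (Fin.zero_le _)
        have hfac : Subobject.ofLE A B hAB ≫ (Subobject.ofLE B (t j.succ) hle ≫
            cokernel.π (Subobject.ofLE (t j.castSucc) (t j.succ)
              (ht.monotone (Fin.castSucc_lt_succ : j.castSucc < j.succ).le))) = 0 := by
          rw [← Category.assoc, Subobject.ofLE_comp_ofLE]
          exact comp_π_zero_of_le _ _ hAt
        by_cases hg : cokernel.desc (Subobject.ofLE A B hAB) _ hfac = 0
        · left
          have hw : Subobject.ofLE B (t j.succ) hle ≫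
              cokernel.π (Subobject.ofLE (t j.castSucc) (t j.succ)
                (ht.monotone (Fin.castSucc_lt_succ : j.castSucc < j.succ).le)) = 0 := by
            have h2 := cokernel.π_desc (Subobject.ofLE A B hAB) _ hfac
            rw [hg, comp_zero] at h2
            exact h2.symm
          exact le_of_comp_π_zero _ hle hw
        · right
          exact ⟨j, by simp, phase_le_of_hom Z hZ hF (htss j) hg⟩
      · right
        exact ⟨j', by simp only [Fin.coe_castSucc, Fin.val_succ] at hj' ⊢; omega, hph⟩
  rcases claim 1 with h | ⟨j', hj', hph⟩
  · exact Or.inl h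
  · right
    have h0 : (0 : Fin (m + 1)) < j' := by
      rw [Fin.lt_def]
      simp only [Fin.val_zero]
      simp only [Fin.val_one] at hj'
      omega
    exact lt_of_le_of_lt hph (htdec 0 j' h0)

lemma main (Z : C → ℂ) (hZ : IsStabilityFunction Z) {E : C} :
    ∀ (n : ℕ) {m : ℕ} (s : Fin (n + 1) → Subobject E) (t : Fin (m + 1) → Subobject E)
      (hs : StrictMono s) (ht : StrictMono t)
      (hb : s 0 = t 0) (hsl : s (Fin.last n) = ⊤) (htl : t (Fin.last m) = ⊤)
      (hsss : ∀ i, Semistable Z (quotObj s hs.monotone i))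
      (htss : ∀ i, Semistable Z (quotObj t ht.monotone i))
      (hsdec : ∀ i j, i < j →
        phase (Z (quotObj s hs.monotone j)) < phase (Z (quotObj s hs.monotone i)))
      (htdec : ∀ i j, i < j →
        phase (Z (quotObj t ht.monotone j)) < phase (Z (quotObj t ht.monotone i))),
      n = m ∧ ∀ (i : ℕ) (hi : i < n + 1) (hj : i < m + 1), s ⟨i, hi⟩ = t ⟨i, hj⟩ := by
  intro n
  induction n with
  | zero =>
    intro m s t hs ht hb hsl htl hsss htss hsdec htdec
    have ht0 : t 0 = ⊤ := by
      rw [← hb, ← hsl]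
      congr
    have hm : Fin.last m = 0 := ht.injective (by rw [htl, ht0])
    have hm0 : m = 0 := by simpa using congrArg Fin.val hm
    subst hm0
    refine ⟨rfl, fun i hi hj => ?_⟩
    have e : (⟨i, hi⟩ : Fin 1) = 0 := by apply Fin.ext; simp; omega
    have e' : (⟨i, hj⟩ : Fin 1) = 0 := by apply Fin.ext; simp; omega
    simp only [e, e']; exact hb
  | succ n' IH =>
    intro m s t hs ht hb hsl htl hsss htss hsdec htdec
    obtain _ | m' := m
    · exfalso
      have h1 : s 0 = ⊤ := by rw [hb, ← htl]; congr
      have hlt : s 0 < s (Fin.last (n' + 1)) := hs (by exact Fin.last_pos)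
      rw [h1, hsl] at hlt
      exact lt_irrefl _ hlt
    have hb01 : s 0 ≤ s 1 := hs.monotone (Fin.zero_le _)
    have hb01t : t 0 ≤ t 1 := ht.monotone (Fin.zero_le _)
    have hF : Semistable Z (subQuot (s 0) (s 1) hb01) := by
      rw [← quotObj_zero s hs.monotone hb01]; exact hsss 0
    have hFt : Semistable Z (subQuot (t 0) (t 1) hb01t) := by
      rw [← quotObj_zero t ht.monotone hb01t]; exact htss 0
    have Dst := dichotomy Z hZ (s 0) (s 1) hb01 hF t ht hb htl htss htdec
    have Dts := dichotomy Z hZ (t 0) (t 1) hb01t hFt s hs hb.symm hsl hsss hsdec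
    rw [quotObj_zero t ht.monotone hb01t] at Dst
    rw [quotObj_zero s hs.monotone hb01] at Dts
    have hst : s 1 = t 1 := by
      rcases Dst with h1 | h1
      · rcases Dts with h2 | h2
        · exact le_antisymm h1 h2
        · exfalso
          have ht0s1 : t 0 ≤ s 1 := hb ▸ hb01
          have hsQ : subQuot (s 0) (s 1) hb01 = subQuot (t 0) (s 1) ht0s1 :=
            subQuot_congr hb rfl
          have hmono := phase_subQuot_le Z (X := t 0) (Y := s 1) (Y' := t 1)
            ht0s1 h1 (by rw [← hsQ]; exact hF.1) (by exact hFt)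
          rw [← hsQ] at hmono
          have : phase (Z (subQuot (t 0) (t 1) hb01t))
              < phase (Z (subQuot (t 0) (t 1) (ht0s1.trans h1))) := by
            exact lt_of_lt_of_le h2 hmono
          exact lt_irrefl _ this
      · rcases Dts with h2 | h2
        · exfalso
          have hs0t1 : s 0 ≤ t 1 := hb.symm ▸ hb01t
          have htQ : subQuot (t 0) (t 1) hb01t = subQuot (s 0) (t 1) hs0t1 :=
            subQuot_congr hb.symm rfl
          have hmono := phase_subQuot_le Z (X := s 0) (Y := t 1) (Y' := s 1)
            hs0t1 h2 (by rw [← htQ]; exact hFt.1) (by exact hF)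
          rw [← htQ] at hmono
          have : phase (Z (subQuot (s 0) (s 1) hb01))
              < phase (Z (subQuot (s 0) (s 1) (hs0t1.trans h2))) := by
            exact lt_of_lt_of_le h1 hmono
          exact lt_irrefl _ this
        · exact absurd (h1.trans h2) (lt_irrefl _)
    set s' : Fin (n' + 1) → Subobject E := fun i => s i.succ with hs'def
    set t' : Fin (m' + 1) → Subobject E := fun i => t i.succ with ht'def
    have hs' : StrictMono s' := fun a b h => hs (Fin.succ_lt_succ_iff.2 h)
    have ht' : StrictMono t' := fun a b h => ht (Fin.succ_lt_succ_iff.2 h)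
    have hqs : ∀ i : Fin n', quotObj s' hs'.monotone i = quotObj s hs.monotone i.succ := by
      intro i
      rw [quotObj_eq, quotObj_eq]
      exact subQuot_congr (show s i.castSucc.succ = s i.succ.castSucc by
        rw [Fin.succ_castSucc]) rfl
    have hqt : ∀ i : Fin m', quotObj t' ht'.monotone i = quotObj t ht.monotone i.succ := by
      intro i
      rw [quotObj_eq, quotObj_eq]
      exact subQuot_congr (show t i.castSucc.succ = t i.succ.castSucc by
        rw [Fin.succ_castSucc]) rfl
    obtain ⟨hnm, heq⟩ := IH s' t' hs' ht'
      (show s (0 : Fin (n' + 1)).succ = t (0 : Fin (m' + 1)).succ by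
        rw [Fin.succ_zero_eq_one, Fin.succ_zero_eq_one]; exact hst)
      (show s (Fin.last n').succ = ⊤ by rw [Fin.succ_last]; exact hsl)
      (show t (Fin.last m').succ = ⊤ by rw [Fin.succ_last]; exact htl)
      (fun i => (hqs i) ▸ hsss i.succ)
      (fun i => (hqt i) ▸ htss i.succ)
      (fun i j hij => by rw [hqs i, hqs j]; exact hsdec _ _ (Fin.succ_lt_succ_iff.2 hij))
      (fun i j hij => by rw [hqt i, hqt j]; exact htdec _ _ (Fin.succ_lt_succ_iff.2 hij))
    refine ⟨by omega, fun i hi hj => ?_⟩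
    match i with
    | 0 =>
      have e : (⟨0, hi⟩ : Fin (n' + 2)) = 0 := by apply Fin.ext; simp
      have e' : (⟨0, hj⟩ : Fin (m' + 2)) = 0 := by apply Fin.ext; simp
      simp only [e, e']; exact hb
    | Nat.succ k =>
      have hk : k < n' + 1 := by omega
      have hk' : k < m' + 1 := by omega
      have h := heq k hk hk'
      have e : (⟨k + 1, hi⟩ : Fin (n' + 2)) = (⟨k, hk⟩ : Fin (n' + 1)).succ := by
        apply Fin.ext; simp
      have e' : (⟨k + 1, hj⟩ : Fin (m' + 2)) = (⟨k, hk'⟩ : Fin (m' + 1)).succ := by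
        apply Fin.ext; simp
      rw [e, e']; exact h

end HNaux2

/-- Uniqueness of Harder–Narasimhan filtrations: two finite filtrations of a
nonzero object `E` by subobjects, starting at `⊥`, ending at `⊤`, strictly
increasing, with semistable factors of strictly decreasing phases, coincide:
they have the same length and the same subobjects. -/
theorem stmt9 {C : Type*} [Category C] [Abelian C] (Z : C → ℂ)
    (hZ : IsStabilityFunction Z)
    {E : C} (hE : ¬ IsZero E) {n m : ℕ}
    (s : Fin (n + 1) → Subobject E) (t : Fin (m + 1) → Subobject E)
    (hs : StrictMono s) (ht : StrictMono t)
    (hs0 : s 0 = ⊥) (hsl : s (Fin.last n) = ⊤)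
    (ht0 : t 0 = ⊥) (htl : t (Fin.last m) = ⊤)
    (hsss : ∀ i : Fin n, Semistable Z (quotObj s hs.monotone i))
    (htss : ∀ i : Fin m, Semistable Z (quotObj t ht.monotone i))
    (hsdec : ∀ i j : Fin n, i < j →
      phase (Z (quotObj s hs.monotone j)) < phase (Z (quotObj s hs.monotone i)))
    (htdec : ∀ i j : Fin m, i < j →
      phase (Z (quotObj t ht.monotone j)) < phase (Z (quotObj t ht.monotone i))) :
    n = m ∧ ∀ (i : ℕ) (hi : i < n + 1) (hj : i < m + 1), s ⟨i, hi⟩ = t ⟨i, hj⟩ := by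
  exact HNaux2.main Z hZ n s t hs ht (by rw [hs0, ht0]) hsl htl hsss htss hsdec htdec
end

section
/- Let D be a k-linear Hom-finite triangulated category and E ∈ D an exceptional object (Hom(E,E) = k and Hom(E,E[p]) = 0 for p ≠ 0). For any C ∈ D, complete the evaluation morphism ⊕_k Hom(E,C[k]) ⊗ E[-k] → C to a distinguished triangle with third vertex D. Then Hom(E, D[p]) = 0 for all p ∈ ℤ, i.e. D lies in the right orthogonal ⟨E⟩^⊥. -/
open CategoryTheory Limits Pretriangulated

section Aux

variable {𝕜 : Type*} [Field 𝕜] {D : Type*} [Category D] [Preadditive D]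
    [Linear 𝕜 D] [HasShift D ℤ] [∀ n : ℤ, (shiftFunctor D n).Additive]

/-- In a 1-dimensional endomorphism algebra, every endomorphism is a scalar
multiple of the identity. -/
lemma aux_exists_smul_id (E : D) [FiniteDimensional 𝕜 (E ⟶ E)]
    (hexc₀ : Module.finrank 𝕜 (E ⟶ E) = 1)
    (f : E ⟶ E) : ∃ c : 𝕜, f = c • 𝟙 E := by
  have hne : (𝟙 E : E ⟶ E) ≠ 0 := by
    intro h0
    have hz : ∀ u : E ⟶ E, u = 0 := fun u => by
      rw [← Category.comp_id u, h0, Limits.comp_zero]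
    have : Subsingleton (E ⟶ E) := ⟨fun a c => by rw [hz a, hz c]⟩
    rw [Module.finrank_zero_of_subsingleton] at hexc₀
    omega
  have hsp : Submodule.span 𝕜 {(𝟙 E : E ⟶ E)} = ⊤ := by
    apply Submodule.eq_top_of_finrank_eq
    rw [finrank_span_singleton hne, hexc₀]
  have hf : f ∈ Submodule.span 𝕜 {(𝟙 E : E ⟶ E)} := hsp ▸ Submodule.mem_top
  obtain ⟨c, hc⟩ := Submodule.mem_span_singleton.mp hf
  exact ⟨c, hc.symm⟩

/-- The key computation: conjugating by the shift units/counits recovers the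
original morphism. -/
lemma aux_comp (k : ℤ) (X Y : D) (β : X ⟶ (shiftFunctor D k).obj Y) :
    (shiftFunctorCompIsoId D (-k) k (by ring)).inv.app X ≫
      (shiftFunctor D k).map ((shiftFunctor D (-k)).map β ≫
        (shiftFunctorCompIsoId D k (-k) (by ring)).hom.app Y) = β := by
  rw [CategoryTheory.Functor.map_comp, shift_shiftFunctorCompIsoId_hom_app]
  have h1 : (shiftFunctorCompIsoId D (-k) k (by ring)).inv.app X ≫
      (shiftFunctor D k).map ((shiftFunctor D (-k)).map β) =
      β ≫ (shiftFunctorCompIsoId D (-k) k (by ring)).inv.app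
        ((shiftFunctor D k).obj Y) := by
    simpa using ((shiftFunctorCompIsoId D (-k) k (by ring)).inv.naturality β).symm
  rw [← Category.assoc, h1, Category.assoc, Iso.inv_hom_id_app]
  simp

/-- Vanishing of homs from an exceptional object into a doubly-shifted copy of
itself in off-diagonal degrees. -/
lemma aux_zero (E : D)
    (hexcp : ∀ p : ℤ, p ≠ 0 → ∀ f : E ⟶ (shiftFunctor D p).obj E, f = 0)
    (q k : ℤ) (hqk : q - k ≠ 0)
    (f : E ⟶ (shiftFunctor D q).obj ((shiftFunctor D (-k)).obj E)) : f = 0 := by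
  have h0 : f ≫ (shiftFunctorAdd' D (-k) q (q - k) (by ring)).inv.app E = 0 :=
    hexcp (q - k) hqk _
  have hiso : f = (f ≫ (shiftFunctorAdd' D (-k) q (q - k) (by ring)).inv.app E) ≫
      (shiftFunctorAdd' D (-k) q (q - k) (by ring)).hom.app E := by
    rw [Category.assoc, Iso.inv_hom_id_app]
    simp
  rw [hiso, h0, Limits.zero_comp]

end Aux

/-- Let `D` be a `𝕜`-linear Hom-finite triangulated category (with finite
biproducts) and `E` an exceptional object: `Hom(E,E) = 𝕜` and
`Hom(E,E[p]) = 0` for `p ≠ 0`. For `C : D`, the (finite) graded Hom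
`⊕ₖ Hom(E,C[k])` is encoded by a finite support set `K`, dimensions `d k` and
bases `b k` of `Hom(E, C[k])`. Completing the evaluation morphism
`⊕ₖ Hom(E,C[k]) ⊗ E[-k] ⟶ C` to a distinguished triangle with third vertex
`Dd`, one has `Hom(E, Dd[p]) = 0` for all `p`, i.e. `Dd` lies in the right
orthogonal `⟨E⟩^⊥`. -/
theorem stmt19 (𝕜 : Type*) [Field 𝕜] {D : Type*} [Category D] [Preadditive D]
    [Linear 𝕜 D] [HasZeroObject D] [HasShift D ℤ]
    [∀ n : ℤ, (shiftFunctor D n).Additive] [Pretriangulated D]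
    [HasFiniteBiproducts D]
    [∀ X Y : D, FiniteDimensional 𝕜 (X ⟶ Y)]
    (E : D)
    (hexc₀ : Module.finrank 𝕜 (E ⟶ E) = 1)
    (hexcp : ∀ p : ℤ, p ≠ 0 → ∀ f : E ⟶ (shiftFunctor D p).obj E, f = 0)
    (C : D) (K : Finset ℤ) (d : ℤ → ℕ)
    (hK : ∀ k : ℤ, k ∉ K → ∀ f : E ⟶ (shiftFunctor D k).obj C, f = 0)
    (b : ∀ k : K, Module.Basis (Fin (d (k : ℤ))) 𝕜 (E ⟶ (shiftFunctor D (k : ℤ)).obj C)) :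
    let A : D := ⨁ fun j : (Σ k : K, Fin (d (k : ℤ))) =>
      (shiftFunctor D (-(j.1 : ℤ))).obj E
    let ev : A ⟶ C := biproduct.desc fun j =>
      (shiftFunctor D (-(j.1 : ℤ))).map (b j.1 j.2) ≫
        (shiftFunctorCompIsoId D (j.1 : ℤ) (-(j.1 : ℤ)) (by ring)).hom.app C
    ∀ (Dd : D) (g : C ⟶ Dd) (h : Dd ⟶ (shiftFunctor D (1 : ℤ)).obj A),
      (Triangle.mk ev g h ∈ distTriang D) →
      ∀ (p : ℤ) (φ : E ⟶ (shiftFunctor D p).obj Dd), φ = 0 := by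
  intro A ev Dd g h hT p φ
  classical
  -- the biproduct components of `ev`
  have hι : ∀ j : (Σ k : K, Fin (d (k : ℤ))),
      biproduct.ι (fun j : (Σ k : K, Fin (d (k : ℤ))) =>
        (shiftFunctor D (-(j.1 : ℤ))).obj E) j ≫ ev =
      (shiftFunctor D (-(j.1 : ℤ))).map (b j.1 j.2) ≫
        (shiftFunctorCompIsoId D (j.1 : ℤ) (-(j.1 : ℤ)) (by ring)).hom.app C :=
    fun j => biproduct.ι_desc _ j
  -- the key component computation
  have hkey : ∀ (q : ℤ) (hq : q ∈ K) (i : Fin (d q)),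
      (shiftFunctorCompIsoId D (-q) q (by ring)).inv.app E ≫
        (shiftFunctor D q).map (biproduct.ι (fun j : (Σ k : K, Fin (d (k : ℤ))) =>
          (shiftFunctor D (-(j.1 : ℤ))).obj E) ⟨⟨q, hq⟩, i⟩ ≫ ev) =
      b ⟨q, hq⟩ i := by
    intro q hq i
    rw [hι ⟨⟨q, hq⟩, i⟩]
    exact aux_comp q E C (b ⟨q, hq⟩ i)
  -- decomposition of any morphism into a shift of `A`
  have hid : ∀ (q : ℤ) (ψ : E ⟶ (shiftFunctor D q).obj A),
      ψ = ∑ j : (Σ k : K, Fin (d (k : ℤ))),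
        (ψ ≫ (shiftFunctor D q).map (biproduct.π (fun j : (Σ k : K, Fin (d (k : ℤ))) => (shiftFunctor D (-(j.1 : ℤ))).obj E) j)) ≫
          (shiftFunctor D q).map (biproduct.ι (fun j : (Σ k : K, Fin (d (k : ℤ))) => (shiftFunctor D (-(j.1 : ℤ))).obj E) j) := by
    intro q ψ
    have htot := biproduct.total (f := fun j : (Σ k : K, Fin (d (k : ℤ))) =>
      (shiftFunctor D (-(j.1 : ℤ))).obj E)
    calc ψ = ψ ≫ (shiftFunctor D q).map (𝟙 A) := by
            rw [CategoryTheory.Functor.map_id, Category.comp_id]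
      _ = _ := by
            rw [← htot, CategoryTheory.Functor.map_sum, Preadditive.comp_sum]
            refine Finset.sum_congr rfl fun j _ => ?_
            rw [CategoryTheory.Functor.map_comp, Category.assoc]
  -- off-diagonal components vanish
  have hcomp0 : ∀ (q : ℤ) (j : (Σ k : K, Fin (d (k : ℤ)))), q - (j.1 : ℤ) ≠ 0 →
      ∀ (ψ : E ⟶ (shiftFunctor D q).obj A),
        ψ ≫ (shiftFunctor D q).map (biproduct.π (fun j : (Σ k : K, Fin (d (k : ℤ))) => (shiftFunctor D (-(j.1 : ℤ))).obj E) j) = 0 :=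
    fun q j hj ψ => aux_zero E hexcp q (j.1 : ℤ) hj _
  -- injectivity of composition with `ev` (after shifting)
  have hinj : ∀ (q : ℤ) (ψ : E ⟶ (shiftFunctor D q).obj A),
      ψ ≫ (shiftFunctor D q).map ev = 0 → ψ = 0 := by
    intro q ψ hψ
    by_cases hq : q ∈ K
    · have hz : ∀ j : (Σ k : K, Fin (d (k : ℤ))), j.1 ≠ ⟨q, hq⟩ →
          ψ ≫ (shiftFunctor D q).map (biproduct.π (fun j : (Σ k : K, Fin (d (k : ℤ))) => (shiftFunctor D (-(j.1 : ℤ))).obj E) j) = 0 := by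
        intro j hj
        refine hcomp0 q j (fun hcontra => hj (Subtype.ext (show (j.1 : ℤ) = q by omega))) ψ
      have hsc : ∀ i : Fin (d q), ∃ c : 𝕜,
          ψ ≫ (shiftFunctor D q).map
              (biproduct.π (fun j : (Σ k : K, Fin (d (k : ℤ))) => (shiftFunctor D (-(j.1 : ℤ))).obj E) (⟨⟨q, hq⟩, i⟩ : Σ k : K, Fin (d (k : ℤ)))) =
            c • (shiftFunctorCompIsoId D (-q) q (by ring)).inv.app E := by
        intro i
        obtain ⟨c, hcc⟩ := aux_exists_smul_id (𝕜 := 𝕜) E hexc₀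
          ((ψ ≫ (shiftFunctor D q).map
              (biproduct.π (fun j : (Σ k : K, Fin (d (k : ℤ))) => (shiftFunctor D (-(j.1 : ℤ))).obj E) (⟨⟨q, hq⟩, i⟩ : Σ k : K, Fin (d (k : ℤ))))) ≫
            (shiftFunctorCompIsoId D (-q) q (by ring)).hom.app E)
        refine ⟨c, ?_⟩
        have hre : ψ ≫ (shiftFunctor D q).map
              (biproduct.π (fun j : (Σ k : K, Fin (d (k : ℤ))) => (shiftFunctor D (-(j.1 : ℤ))).obj E) (⟨⟨q, hq⟩, i⟩ : Σ k : K, Fin (d (k : ℤ)))) =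
            ((ψ ≫ (shiftFunctor D q).map
                (biproduct.π (fun j : (Σ k : K, Fin (d (k : ℤ))) => (shiftFunctor D (-(j.1 : ℤ))).obj E) (⟨⟨q, hq⟩, i⟩ : Σ k : K, Fin (d (k : ℤ))))) ≫
              (shiftFunctorCompIsoId D (-q) q (by ring)).hom.app E) ≫
              (shiftFunctorCompIsoId D (-q) q (by ring)).inv.app E := by
          rw [Category.assoc, Iso.hom_inv_id_app]
          simp
        rw [hre, hcc, Linear.smul_comp, Category.id_comp]
      choose c hc using hsc
      have e1 : (0 : E ⟶ (shiftFunctor D q).obj C) =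
          ∑ i : Fin (d q), c i • b ⟨q, hq⟩ i := by
        calc (0 : E ⟶ (shiftFunctor D q).obj C)
            = ψ ≫ (shiftFunctor D q).map ev := hψ.symm
          _ = ∑ j : (Σ k : K, Fin (d (k : ℤ))),
                (ψ ≫ (shiftFunctor D q).map (biproduct.π (fun j : (Σ k : K, Fin (d (k : ℤ))) => (shiftFunctor D (-(j.1 : ℤ))).obj E) j)) ≫
                  (shiftFunctor D q).map (biproduct.ι (fun j : (Σ k : K, Fin (d (k : ℤ))) => (shiftFunctor D (-(j.1 : ℤ))).obj E) j ≫ ev) := by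
              conv_lhs => rw [hid q ψ]
              rw [Preadditive.sum_comp]
              refine Finset.sum_congr rfl fun j _ => ?_
              rw [CategoryTheory.Functor.map_comp, Category.assoc]
          _ = ∑ k : K, ∑ i : Fin (d (k : ℤ)),
                (ψ ≫ (shiftFunctor D q).map (biproduct.π (fun j : (Σ k : K, Fin (d (k : ℤ))) => (shiftFunctor D (-(j.1 : ℤ))).obj E) (⟨k, i⟩ : Σ k : K, Fin (d (k : ℤ))))) ≫
                  (shiftFunctor D q).map (biproduct.ι (fun j : (Σ k : K, Fin (d (k : ℤ))) => (shiftFunctor D (-(j.1 : ℤ))).obj E) (⟨k, i⟩ : Σ k : K, Fin (d (k : ℤ))) ≫ ev) := by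
              rw [← Finset.univ_sigma_univ, Finset.sum_sigma]
          _ = ∑ i : Fin (d q),
                (ψ ≫ (shiftFunctor D q).map (biproduct.π (fun j : (Σ k : K, Fin (d (k : ℤ))) => (shiftFunctor D (-(j.1 : ℤ))).obj E) (⟨⟨q, hq⟩, i⟩ : Σ k : K, Fin (d (k : ℤ))))) ≫
                  (shiftFunctor D q).map (biproduct.ι (fun j : (Σ k : K, Fin (d (k : ℤ))) => (shiftFunctor D (-(j.1 : ℤ))).obj E) (⟨⟨q, hq⟩, i⟩ : Σ k : K, Fin (d (k : ℤ))) ≫ ev) := by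
              refine Finset.sum_eq_single (⟨q, hq⟩ : K)
                (fun k _ hk => Finset.sum_eq_zero fun i _ => ?_)
                (fun habs => absurd (Finset.mem_univ _) habs)
              rw [hz ⟨k, i⟩ hk, Limits.zero_comp]
          _ = ∑ i : Fin (d q), c i • b ⟨q, hq⟩ i := by
              refine Finset.sum_congr rfl fun i _ => ?_
              rw [hc i, Linear.smul_comp, hkey q hq i]
      have hc0 : ∀ i : Fin (d q), c i = 0 :=
        Fintype.linearIndependent_iff.mp (b ⟨q, hq⟩).linearIndependent c e1.symm
      rw [hid q ψ]
      refine Finset.sum_eq_zero ?_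
      rintro ⟨k, i⟩ -
      by_cases hk : k = ⟨q, hq⟩
      · subst hk
        rw [hc i, hc0 i, zero_smul, Limits.zero_comp]
      · rw [hz ⟨k, i⟩ hk, Limits.zero_comp]
    · rw [hid q ψ]
      refine Finset.sum_eq_zero fun j _ => ?_
      refine Eq.trans (congrArg (· ≫ _) (hcomp0 q j (fun hcontra => hq ?_) ψ))
        Limits.zero_comp
      have : q = (j.1 : ℤ) := by omega
      rw [this]
      exact j.1.2
  -- surjectivity of composition with `ev` (after shifting)
  have hsurj : ∀ (q : ℤ) (χ : E ⟶ (shiftFunctor D q).obj C),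
      ∃ ψ : E ⟶ (shiftFunctor D q).obj A, χ = ψ ≫ (shiftFunctor D q).map ev := by
    intro q χ
    by_cases hq : q ∈ K
    · refine ⟨∑ i : Fin (d q), (b ⟨q, hq⟩).repr χ i •
        ((shiftFunctorCompIsoId D (-q) q (by ring)).inv.app E ≫
          (shiftFunctor D q).map (biproduct.ι (fun j : (Σ k : K, Fin (d (k : ℤ))) =>
            (shiftFunctor D (-(j.1 : ℤ))).obj E) ⟨⟨q, hq⟩, i⟩)), ?_⟩
      rw [Preadditive.sum_comp]
      have hterm : ∀ i : Fin (d q),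
          ((b ⟨q, hq⟩).repr χ i •
            ((shiftFunctorCompIsoId D (-q) q (by ring)).inv.app E ≫
              (shiftFunctor D q).map (biproduct.ι (fun j : (Σ k : K, Fin (d (k : ℤ))) =>
                (shiftFunctor D (-(j.1 : ℤ))).obj E) ⟨⟨q, hq⟩, i⟩))) ≫
            (shiftFunctor D q).map ev =
          (b ⟨q, hq⟩).repr χ i • b ⟨q, hq⟩ i := by
        intro i
        rw [Linear.smul_comp, Category.assoc, ← CategoryTheory.Functor.map_comp, hkey q hq i]
      rw [Finset.sum_congr rfl fun i _ => hterm i]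
      exact ((b ⟨q, hq⟩).sum_repr χ).symm
    · exact ⟨0, by rw [hK q hq χ, Limits.zero_comp]⟩
  -- the shifted distinguished triangle
  have hT' : Triangle.mk (p.negOnePow • (shiftFunctor D p).map ev)
      (p.negOnePow • (shiftFunctor D p).map g)
      (p.negOnePow • ((shiftFunctor D p).map h ≫
        (shiftFunctorComm D 1 p).hom.app A)) ∈ distTriang D :=
    Triangle.shift_distinguished _ hT p
  have hz31 := comp_distTriang_mor_zero₃₁ _ hT'
  replace hz31 : (p.negOnePow • ((shiftFunctor D p).map h ≫ (shiftFunctorComm D 1 p).hom.app A)) ≫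
      (shiftFunctor D 1).map (p.negOnePow • (shiftFunctor D p).map ev) = 0 := hz31
  rw [CategoryTheory.Functor.map_units_smul, Linear.units_smul_comp, Linear.comp_units_smul,
    smul_smul, Int.units_mul_self, one_smul] at hz31
  -- hz31 : (map h ≫ comm) ≫ map (map ev) = 0
  have key1 : φ ≫ (((shiftFunctor D p).map h ≫ (shiftFunctorComm D 1 p).hom.app A) ≫
      (shiftFunctor D 1).map ((shiftFunctor D p).map ev)) = 0 := by
    rw [hz31, Limits.comp_zero]
  -- transport along the additivity isomorphism of shifts
  have key2 : ((φ ≫ ((shiftFunctor D p).map h ≫ (shiftFunctorComm D 1 p).hom.app A)) ≫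
      (shiftFunctorAdd' D p 1 (p + 1) rfl).inv.app A) ≫
      (shiftFunctor D (p + 1)).map ev = 0 := by
    have hnat : (shiftFunctorAdd' D p 1 (p + 1) rfl).inv.app A ≫
        (shiftFunctor D (p + 1)).map ev =
        (shiftFunctor D 1).map ((shiftFunctor D p).map ev) ≫
          (shiftFunctorAdd' D p 1 (p + 1) rfl).inv.app C := by
      simpa using ((shiftFunctorAdd' D p 1 (p + 1) rfl).inv.naturality ev).symm
    rw [Category.assoc, hnat, ← Category.assoc]
    have hfin : (φ ≫ ((shiftFunctor D p).map h ≫ (shiftFunctorComm D 1 p).hom.app A)) ≫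
        (shiftFunctor D 1).map ((shiftFunctor D p).map ev) = 0 := by
      simpa only [Category.assoc] using key1
    rw [hfin, Limits.zero_comp]
  have hψ0 := hinj (p + 1) _ key2
  have hx0 : φ ≫ ((shiftFunctor D p).map h ≫ (shiftFunctorComm D 1 p).hom.app A) = 0 := by
    have hre : φ ≫ ((shiftFunctor D p).map h ≫ (shiftFunctorComm D 1 p).hom.app A) =
        ((φ ≫ ((shiftFunctor D p).map h ≫ (shiftFunctorComm D 1 p).hom.app A)) ≫
          (shiftFunctorAdd' D p 1 (p + 1) rfl).inv.app A) ≫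
          (shiftFunctorAdd' D p 1 (p + 1) rfl).hom.app A := by
      rw [Category.assoc, Iso.inv_hom_id_app]
      simp
    rw [hre, hψ0, Limits.zero_comp]
  -- exactness: φ factors through C⟦p⟧
  obtain ⟨χ, hχ⟩ := Triangle.coyoneda_exact₃ _ hT' φ
    (by
      change φ ≫ (p.negOnePow • ((shiftFunctor D p).map h ≫ (shiftFunctorComm D 1 p).hom.app A)) = 0
      rw [Linear.comp_units_smul, hx0, smul_zero])
  obtain ⟨ψ₀, hψ₀⟩ := hsurj p χ
  have hevg : ev ≫ g = 0 := comp_distTriang_mor_zero₁₂ _ hT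
  rw [hχ, hψ₀]
  change (ψ₀ ≫ (shiftFunctor D p).map ev) ≫ (p.negOnePow • (shiftFunctor D p).map g) = 0
  rw [Linear.comp_units_smul, Category.assoc, ← CategoryTheory.Functor.map_comp, hevg,
    CategoryTheory.Functor.map_zero, Limits.comp_zero, smul_zero]
end
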